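/- arXiv:2005.02552 — 4 statements merged into one kernel-verified Lean document; each statement's English description precedes it below -/
import Mathlib

section
/- Let NN be a K-way, L-layer fully-connected network (L ≥ 2) with weight matrices w_1,…,w_L, bias vectors b_1,…,b_L, and a componentwise activation f : ℝ → ℝ that is Lipschitz with constant C ≥ 0, whose softmax output is NN(x)_k = exp(θ_k(x)) / Σ_{p=1}^K exp(θ_p(x)), where θ(x) = w_L h_{L−1}(x) + b_L and h_0(x) = x, h_i(x) = f∘(w_i h_{i−1}(x) + b_i) for 1 ≤ i ≤ L−1. Let ξ be a perturbation vector and set η = max_{k=1,…,K} [ C^{L−1} (|w_L|·|w_{L−1}|⋯|w_1|·|ξ|)_k + (b_L)_k ], where |·| denotes entrywise absolute value. If every entry of b_L is nonnegative, then for every k, the output variation satisfies |NN(x)_k − NN(x+ξ)_k| ≤ exp(θ_k(x)) · (e^η − e^{−η}) / Σ_{p=1}^K exp(θ_p(x+ξ)). -/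
/-- Hidden states of a fully-connected network: `hiddenState dims w b f i x` is `h_i(x)`,
with `h_0(x) = x` and `h_{i+1}(x) = f ∘ (w_{i+1} h_i(x) + b_{i+1})` (the paper's `w_{i+1}`
is `w i` here, i.e. the paper's 1-indexed `w_i` is the 0-indexed `w (i-1)`). -/
def hiddenState (dims : ℕ → ℕ)
    (w : (i : ℕ) → Matrix (Fin (dims (i + 1))) (Fin (dims i)) ℝ)
    (b : (i : ℕ) → Fin (dims (i + 1)) → ℝ) (f : ℝ → ℝ) :
    (i : ℕ) → (Fin (dims 0) → ℝ) → (Fin (dims i) → ℝ)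
  | 0, x => x
  | i + 1, x => fun j => f ((w i).mulVec (hiddenState dims w b f i x) j + b i j)

/-- `absChain dims w ξ i = |w_i|·|w_{i-1}|⋯|w_1|·|ξ|` (entrywise absolute values),
a vector of size `dims i`; the base case is `|ξ|`. -/
def absChain (dims : ℕ → ℕ)
    (w : (i : ℕ) → Matrix (Fin (dims (i + 1))) (Fin (dims i)) ℝ)
    (ξ : Fin (dims 0) → ℝ) :
    (i : ℕ) → (Fin (dims i) → ℝ)
  | 0 => fun j => |ξ j|
  | i + 1 => ((w i).map (fun a => |a|)).mulVec (absChain dims w ξ i)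

/-- **Theorem 1 of the paper, with bias term.** For a `K`-way, `L`-layer
fully-connected network (`L ≥ 2`, `K = dims (L-1+1) = dims L ≥ 1`) with activation `f`
Lipschitz with constant `C ≥ 0`, logits `θ(x) = w_L h_{L-1}(x) + b_L`, softmax output
`NN(x)_k = exp(θ_k(x)) / ∑_p exp(θ_p(x))`, perturbation `ξ`, and
`η = max_k [C^{L-1}·(|w_L|·|w_{L-1}|⋯|w_1|·|ξ|)_k + (b_L)_k]`: if all entries of `b_L`
are nonnegative, then for every `k`,
`|NN(x)_k − NN(x+ξ)_k| ≤ exp(θ_k(x))·(e^η − e^{−η}) / ∑_p exp(θ_p(x+ξ))`. -/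
theorem softmax_output_variation_bound_with_bias (L : ℕ) (hL : 2 ≤ L) (dims : ℕ → ℕ)
    (hK : 0 < dims (L - 1 + 1))
    (w : (i : ℕ) → Matrix (Fin (dims (i + 1))) (Fin (dims i)) ℝ)
    (b : (i : ℕ) → Fin (dims (i + 1)) → ℝ)
    (f : ℝ → ℝ) (C : ℝ) (hC : 0 ≤ C)
    (hf : ∀ s t : ℝ, |f s - f t| ≤ C * |s - t|)
    (hb : ∀ k : Fin (dims (L - 1 + 1)), 0 ≤ b (L - 1) k)
    (θ : (Fin (dims 0) → ℝ) → Fin (dims (L - 1 + 1)) → ℝ)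
    (hθ : ∀ y k, θ y k =
      (w (L - 1)).mulVec (hiddenState dims w b f (L - 1) y) k + b (L - 1) k)
    (NN : (Fin (dims 0) → ℝ) → Fin (dims (L - 1 + 1)) → ℝ)
    (hNN : ∀ y k, NN y k = Real.exp (θ y k) / ∑ p, Real.exp (θ y p))
    (x ξ : Fin (dims 0) → ℝ) (η : ℝ)
    (hη : η = Finset.univ.sup'
        (Finset.univ_nonempty_iff.mpr (Fin.pos_iff_nonempty.mp hK))
        (fun k => C ^ (L - 1) * absChain dims w ξ (L - 1 + 1) k + b (L - 1) k)) :
    ∀ k : Fin (dims (L - 1 + 1)),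
      |NN x k - NN (x + ξ) k| ≤
        Real.exp (θ x k) * (Real.exp η - Real.exp (-η)) /
          ∑ p, Real.exp (θ (x + ξ) p) := by

  intro k
  set y := x + ξ with hy
  -- hidden state perturbation bound
  have hhid : ∀ i j, |hiddenState dims w b f i x j - hiddenState dims w b f i y j| ≤
      C ^ i * absChain dims w ξ i j := by
    intro i
    induction i with
    | zero =>
      intro j
      simp only [hiddenState, absChain, pow_zero, one_mul, hy, Pi.add_apply]
      rw [abs_sub_comm]
      simp
    | succ i ih =>
      intro j
      simp only [hiddenState]
      calc |f ((w i).mulVec (hiddenState dims w b f i x) j + b i j) -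
            f ((w i).mulVec (hiddenState dims w b f i y) j + b i j)| ≤
            C * |(w i).mulVec (hiddenState dims w b f i x) j -
              (w i).mulVec (hiddenState dims w b f i y) j| := by
              have := hf ((w i).mulVec (hiddenState dims w b f i x) j + b i j)
                ((w i).mulVec (hiddenState dims w b f i y) j + b i j)
              simpa using this
        _ ≤ C * ∑ p, |w i j p| * (C ^ i * absChain dims w ξ i p) := by
              apply mul_le_mul_of_nonneg_left _ hC
              rw [Matrix.mulVec, Matrix.mulVec, dotProduct, dotProduct,
                ← Finset.sum_sub_distrib]
              calc |∑ p, (w i j p * hiddenState dims w b f i x p -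
                    w i j p * hiddenState dims w b f i y p)| ≤
                  ∑ p, |w i j p * hiddenState dims w b f i x p -
                    w i j p * hiddenState dims w b f i y p| := Finset.abs_sum_le_sum_abs _ _
                _ ≤ ∑ p, |w i j p| * (C ^ i * absChain dims w ξ i p) := by
                    apply Finset.sum_le_sum
                    intro p _
                    rw [← mul_sub, abs_mul]
                    exact mul_le_mul_of_nonneg_left (ih p) (abs_nonneg _)
        _ = C ^ (i + 1) * absChain dims w ξ (i + 1) j := by
              simp only [absChain, Matrix.mulVec, dotProduct, Matrix.map_apply,
                Finset.mul_sum, pow_succ]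
              apply Finset.sum_congr rfl
              intro p _
              ring
  -- logit perturbation bound
  have hne : Finset.univ.Nonempty := Finset.univ_nonempty_iff.mpr (Fin.pos_iff_nonempty.mp hK)
  have hθb : ∀ p : Fin (dims (L - 1 + 1)), |θ x p - θ y p| ≤ η := by
    intro p
    have h1 : |θ x p - θ y p| ≤ C ^ (L - 1) * absChain dims w ξ (L - 1 + 1) p := by
      rw [hθ, hθ, add_sub_add_right_eq_sub, Matrix.mulVec, Matrix.mulVec,
        dotProduct, dotProduct, ← Finset.sum_sub_distrib]
      calc |∑ q, (w (L - 1) p q * hiddenState dims w b f (L - 1) x q -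
            w (L - 1) p q * hiddenState dims w b f (L - 1) y q)| ≤
          ∑ q, |w (L - 1) p q * hiddenState dims w b f (L - 1) x q -
            w (L - 1) p q * hiddenState dims w b f (L - 1) y q| :=
            Finset.abs_sum_le_sum_abs _ _
        _ ≤ ∑ q, |w (L - 1) p q| * (C ^ (L - 1) * absChain dims w ξ (L - 1) q) := by
            apply Finset.sum_le_sum
            intro q _
            rw [← mul_sub, abs_mul]
            exact mul_le_mul_of_nonneg_left (hhid (L - 1) q) (abs_nonneg _)
        _ = C ^ (L - 1) * absChain dims w ξ (L - 1 + 1) p := by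
            simp only [absChain, Matrix.mulVec, dotProduct, Matrix.map_apply,
              Finset.mul_sum]
            apply Finset.sum_congr rfl
            intro q _
            ring
    have h2 : C ^ (L - 1) * absChain dims w ξ (L - 1 + 1) p + b (L - 1) p ≤ η := by
      rw [hη]
      exact Finset.le_sup' (fun q => C ^ (L - 1) * absChain dims w ξ (L - 1 + 1) q + b (L - 1) q)
        (Finset.mem_univ p)
    have := hb p
    linarith
  -- sums of exponentials
  set Sx := ∑ p, Real.exp (θ x p) with hSx
  set Sy := ∑ p, Real.exp (θ y p) with hSy
  have hSxpos : 0 < Sx := Finset.sum_pos (fun p _ => Real.exp_pos _) hne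
  have hSypos : 0 < Sy := Finset.sum_pos (fun p _ => Real.exp_pos _) hne
  have hexp_le : ∀ p : Fin (dims (L - 1 + 1)),
      Real.exp (θ y p) ≤ Real.exp η * Real.exp (θ x p) := by
    intro p
    rw [← Real.exp_add]
    apply Real.exp_le_exp.mpr
    have := (abs_le.mp (hθb p)).1
    linarith
  have hexp_ge : ∀ p : Fin (dims (L - 1 + 1)),
      Real.exp (θ x p) ≤ Real.exp η * Real.exp (θ y p) := by
    intro p
    rw [← Real.exp_add]
    apply Real.exp_le_exp.mpr
    have := (abs_le.mp (hθb p)).2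
    linarith
  have hSyx : Sy ≤ Real.exp η * Sx := by
    rw [hSx, hSy, Finset.mul_sum]
    exact Finset.sum_le_sum fun p _ => hexp_le p
  have hSxy : Sx ≤ Real.exp η * Sy := by
    rw [hSx, hSy, Finset.mul_sum]
    exact Finset.sum_le_sum fun p _ => hexp_ge p
  have hek : Real.exp (θ x k) * Real.exp (-η) ≤ Real.exp (θ y k) := by
    rw [← Real.exp_add]
    apply Real.exp_le_exp.mpr
    have := (abs_le.mp (hθb k)).2
    linarith
  have hek2 : Real.exp (θ y k) ≤ Real.exp (θ x k) * Real.exp η := by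
    rw [← Real.exp_add]
    apply Real.exp_le_exp.mpr
    have := (abs_le.mp (hθb k)).1
    linarith
  rw [hNN, hNN, ← hSx, ← hSy]
  have hexk : (0:ℝ) < Real.exp (θ x k) := Real.exp_pos _
  have hA2 : Real.exp (θ x k) / Sx ≤ Real.exp (θ x k) * Real.exp η / Sy := by
    rw [div_le_div_iff₀ hSxpos hSypos]
    nlinarith
  have hA1 : Real.exp (θ x k) * Real.exp (-η) / Sy ≤ Real.exp (θ x k) / Sx := by
    rw [div_le_div_iff₀ hSypos hSxpos]
    have hexpη : (0:ℝ) < Real.exp η := Real.exp_pos _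
    have key : Real.exp (-η) * Sx ≤ Sy := by
      have := mul_le_mul_of_nonneg_left hSxy (le_of_lt (Real.exp_pos (-η)))
      rw [← mul_assoc, ← Real.exp_add, neg_add_cancel, Real.exp_zero, one_mul] at this
      exact this
    nlinarith
  have hB1 : Real.exp (θ x k) * Real.exp (-η) / Sy ≤ Real.exp (θ y k) / Sy := by
    gcongr
  have hB2 : Real.exp (θ y k) / Sy ≤ Real.exp (θ x k) * Real.exp η / Sy := by
    gcongr
  rw [abs_le]
  constructor
  · have : Real.exp (θ x k) * (Real.exp η - Real.exp (-η)) / Sy =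
        Real.exp (θ x k) * Real.exp η / Sy - Real.exp (θ x k) * Real.exp (-η) / Sy := by
      ring
    rw [this]
    linarith
  · have : Real.exp (θ x k) * (Real.exp η - Real.exp (-η)) / Sy =
        Real.exp (θ x k) * Real.exp η / Sy - Real.exp (θ x k) * Real.exp (-η) / Sy := by
      ring
    rw [this]
    linarith
end

section
/- Let NN be a K-way, L-layer fully-connected network (L ≥ 2) with weight matrices w_1,…,w_L, bias vectors b_1,…,b_L, componentwise activation f : ℝ → ℝ Lipschitz with constant C ≥ 0, logits θ(x) = w_L h_{L−1}(x) + b_L, and softmax output NN(x)_k = exp(θ_k(x)) / Σ_{p=1}^K exp(θ_p(x)). Let ξ be a perturbation vector and set η = C^{L−1} · max_{k=1,…,K} (|w_L|·|w_{L−1}|⋯|w_1|·|ξ|)_k, where |·| denotes entrywise absolute value. Then for every k, |NN(x)_k − NN(x+ξ)_k| ≤ exp(θ_k(x)) · (e^η − e^{−η}) / Σ_{p=1}^K exp(θ_p(x+ξ)). -/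
lemma absChain_nonneg (dims : ℕ → ℕ)
    (w : (i : ℕ) → Matrix (Fin (dims (i + 1))) (Fin (dims i)) ℝ)
    (ξ : Fin (dims 0) → ℝ) :
    ∀ i j, 0 ≤ absChain dims w ξ i j := by
  intro i
  induction i with
  | zero => intro j; exact abs_nonneg _
  | succ i ih =>
    intro j
    simp only [absChain, Matrix.mulVec, dotProduct, Matrix.map_apply]
    exact Finset.sum_nonneg fun l _ => mul_nonneg (abs_nonneg _) (ih l)

lemma hidden_diff (dims : ℕ → ℕ)
    (w : (i : ℕ) → Matrix (Fin (dims (i + 1))) (Fin (dims i)) ℝ)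
    (b : (i : ℕ) → Fin (dims (i + 1)) → ℝ)
    (f : ℝ → ℝ) (C : ℝ) (hC : 0 ≤ C)
    (hf : ∀ s t : ℝ, |f s - f t| ≤ C * |s - t|)
    (x ξ : Fin (dims 0) → ℝ) :
    ∀ i j, |hiddenState dims w b f i x j - hiddenState dims w b f i (x + ξ) j|
      ≤ C ^ i * absChain dims w ξ i j := by
  intro i
  induction i with
  | zero =>
    intro j
    simp [hiddenState, absChain, abs_sub_comm]
  | succ i ih =>
    intro j
    simp only [hiddenState, absChain]
    calc |f ((w i).mulVec (hiddenState dims w b f i x) j + b i j) -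
          f ((w i).mulVec (hiddenState dims w b f i (x + ξ)) j + b i j)|
        ≤ C * |(w i).mulVec (hiddenState dims w b f i x) j -
            (w i).mulVec (hiddenState dims w b f i (x + ξ)) j| := by
          have := hf ((w i).mulVec (hiddenState dims w b f i x) j + b i j)
            ((w i).mulVec (hiddenState dims w b f i (x + ξ)) j + b i j)
          simpa using this
      _ ≤ C * (C ^ i * ((w i).map (fun a => |a|)).mulVec (absChain dims w ξ i) j) := by
          apply mul_le_mul_of_nonneg_left _ hC
          simp only [Matrix.mulVec, dotProduct, Matrix.map_apply]
          rw [← Finset.sum_sub_distrib, Finset.mul_sum]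
          calc |∑ l, (w i j l * hiddenState dims w b f i x l -
                w i j l * hiddenState dims w b f i (x + ξ) l)|
              ≤ ∑ l, |w i j l * hiddenState dims w b f i x l -
                w i j l * hiddenState dims w b f i (x + ξ) l| := Finset.abs_sum_le_sum_abs _ _
            _ ≤ ∑ l, C ^ i * (|w i j l| * absChain dims w ξ i l) := by
                apply Finset.sum_le_sum
                intro l _
                rw [← mul_sub, abs_mul]
                calc |w i j l| * |hiddenState dims w b f i x l -
                      hiddenState dims w b f i (x + ξ) l|
                    ≤ |w i j l| * (C ^ i * absChain dims w ξ i l) :=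
                      mul_le_mul_of_nonneg_left (ih l) (abs_nonneg _)
                  _ = C ^ i * (|w i j l| * absChain dims w ξ i l) := by ring
            _ = ∑ l, C ^ i * (|w i j l| * absChain dims w ξ i l) := rfl
      _ = C ^ (i + 1) * ((w i).map (fun a => |a|)).mulVec (absChain dims w ξ i) j := by
          ring

/-- For a `K`-way, `L`-layer fully-connected network (`L ≥ 2`,
`K = dims (L-1+1) = dims L ≥ 1`) with activation `f` Lipschitz with constant `C ≥ 0`,
logits `θ(x) = w_L h_{L-1}(x) + b_L`, softmax output
`NN(x)_k = exp(θ_k(x)) / ∑_p exp(θ_p(x))`, perturbation `ξ`, and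
`η = C^{L-1} · max_k (|w_L|·|w_{L-1}|⋯|w_1|·|ξ|)_k`: for every `k`,
`|NN(x)_k − NN(x+ξ)_k| ≤ exp(θ_k(x))·(e^η − e^{−η}) / ∑_p exp(θ_p(x+ξ))`. -/
theorem softmax_output_variation_bound (L : ℕ) (hL : 2 ≤ L) (dims : ℕ → ℕ)
    (hK : 0 < dims (L - 1 + 1))
    (w : (i : ℕ) → Matrix (Fin (dims (i + 1))) (Fin (dims i)) ℝ)
    (b : (i : ℕ) → Fin (dims (i + 1)) → ℝ)
    (f : ℝ → ℝ) (C : ℝ) (hC : 0 ≤ C)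
    (hf : ∀ s t : ℝ, |f s - f t| ≤ C * |s - t|)
    (θ : (Fin (dims 0) → ℝ) → Fin (dims (L - 1 + 1)) → ℝ)
    (hθ : ∀ y k, θ y k =
      (w (L - 1)).mulVec (hiddenState dims w b f (L - 1) y) k + b (L - 1) k)
    (NN : (Fin (dims 0) → ℝ) → Fin (dims (L - 1 + 1)) → ℝ)
    (hNN : ∀ y k, NN y k = Real.exp (θ y k) / ∑ p, Real.exp (θ y p))
    (x ξ : Fin (dims 0) → ℝ) (η : ℝ)
    (hη : η = C ^ (L - 1) * Finset.univ.sup'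
        (Finset.univ_nonempty_iff.mpr (Fin.pos_iff_nonempty.mp hK))
        (fun k => absChain dims w ξ (L - 1 + 1) k)) :
    ∀ k : Fin (dims (L - 1 + 1)),
      |NN x k - NN (x + ξ) k| ≤
        Real.exp (θ x k) * (Real.exp η - Real.exp (-η)) /
          ∑ p, Real.exp (θ (x + ξ) p) := by
  -- θ variation bound
  have hθd : ∀ k, |θ x k - θ (x + ξ) k| ≤ η := by
    intro k
    rw [hθ, hθ, hη]
    have key : |(w (L-1)).mulVec (hiddenState dims w b f (L-1) x) k -
        (w (L-1)).mulVec (hiddenState dims w b f (L-1) (x+ξ)) k|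
        ≤ C ^ (L-1) * absChain dims w ξ (L-1+1) k := by
      simp only [absChain, Matrix.mulVec, dotProduct, Matrix.map_apply]
      rw [← Finset.sum_sub_distrib, Finset.mul_sum]
      calc |∑ l, (w (L-1) k l * hiddenState dims w b f (L-1) x l -
            w (L-1) k l * hiddenState dims w b f (L-1) (x+ξ) l)|
          ≤ ∑ l, |w (L-1) k l * hiddenState dims w b f (L-1) x l -
            w (L-1) k l * hiddenState dims w b f (L-1) (x+ξ) l| :=
            Finset.abs_sum_le_sum_abs _ _
        _ ≤ ∑ l, C ^ (L-1) * (|w (L-1) k l| * absChain dims w ξ (L-1) l) := by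
            apply Finset.sum_le_sum
            intro l _
            rw [← mul_sub, abs_mul]
            calc |w (L-1) k l| * |hiddenState dims w b f (L-1) x l -
                  hiddenState dims w b f (L-1) (x+ξ) l|
                ≤ |w (L-1) k l| * (C ^ (L-1) * absChain dims w ξ (L-1) l) :=
                  mul_le_mul_of_nonneg_left
                    (hidden_diff dims w b f C hC hf x ξ (L-1) l) (abs_nonneg _)
              _ = C ^ (L-1) * (|w (L-1) k l| * absChain dims w ξ (L-1) l) := by ring
    have hsup : absChain dims w ξ (L-1+1) k ≤ Finset.univ.sup'
        (Finset.univ_nonempty_iff.mpr (Fin.pos_iff_nonempty.mp hK))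
        (fun k => absChain dims w ξ (L - 1 + 1) k) :=
      Finset.le_sup' _ (Finset.mem_univ k)
    calc |((w (L-1)).mulVec (hiddenState dims w b f (L-1) x) k + b (L-1) k) -
          ((w (L-1)).mulVec (hiddenState dims w b f (L-1) (x+ξ)) k + b (L-1) k)|
        = |(w (L-1)).mulVec (hiddenState dims w b f (L-1) x) k -
          (w (L-1)).mulVec (hiddenState dims w b f (L-1) (x+ξ)) k| := by ring_nf
      _ ≤ C ^ (L-1) * absChain dims w ξ (L-1+1) k := key
      _ ≤ _ := mul_le_mul_of_nonneg_left hsup (pow_nonneg hC _)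
  have hη0 : 0 ≤ η := by
    obtain ⟨k⟩ := Fin.pos_iff_nonempty.mp hK
    exact le_trans (abs_nonneg _) (hθd k)
  intro k
  rw [hNN, hNN]
  set S := ∑ p, Real.exp (θ x p) with hS
  set T := ∑ p, Real.exp (θ (x+ξ) p) with hT
  have hTpos : 0 < T := Finset.sum_pos (fun p _ => Real.exp_pos _)
    (Finset.univ_nonempty_iff.mpr (Fin.pos_iff_nonempty.mp hK))
  have hSlow : Real.exp (-η) * T ≤ S := by
    rw [Finset.mul_sum]
    apply Finset.sum_le_sum
    intro p _
    rw [← Real.exp_add]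
    apply Real.exp_le_exp.mpr
    have := (abs_le.mp (hθd p)).1
    linarith
  have hSpos : 0 < S := lt_of_lt_of_le (mul_pos (Real.exp_pos _) hTpos) hSlow
  set a := Real.exp (θ x k) with ha
  have hapos : 0 < a := Real.exp_pos _
  have hbk1 : Real.exp (θ (x+ξ) k) ≤ Real.exp η * a := by
    rw [← Real.exp_add]
    apply Real.exp_le_exp.mpr
    have := (abs_le.mp (hθd k)).1
    linarith
  have hbk2 : Real.exp (-η) * a ≤ Real.exp (θ (x+ξ) k) := by
    rw [← Real.exp_add]
    apply Real.exp_le_exp.mpr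
    have := (abs_le.mp (hθd k)).2
    linarith
  have hE1 : Real.exp η * Real.exp (-η) = 1 := by
    rw [← Real.exp_add]; simp
  have hShigh : S ≤ Real.exp η * T := by
    rw [Finset.mul_sum]
    apply Finset.sum_le_sum
    intro p _
    rw [← Real.exp_add]
    apply Real.exp_le_exp.mpr
    have := (abs_le.mp (hθd p)).2
    linarith
  have hexpη : 0 < Real.exp η := Real.exp_pos _
  have hexpnη : 0 < Real.exp (-η) := Real.exp_pos _
  have hT_le : T ≤ Real.exp η * S := by
    calc T = Real.exp η * (Real.exp (-η) * T) := by rw [← mul_assoc, hE1, one_mul]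
      _ ≤ Real.exp η * S := mul_le_mul_of_nonneg_left hSlow hexpη.le
  have hS_le : S ≤ Real.exp η * T := hShigh
  have h1 : a / S ≤ Real.exp η * a / T := by
    rw [div_le_div_iff₀ hSpos hTpos]
    nlinarith [mul_le_mul_of_nonneg_left hT_le hapos.le]
  have h2 : Real.exp (-η) * a / T ≤ a / S := by
    rw [div_le_div_iff₀ hTpos hSpos]
    nlinarith [mul_le_mul_of_nonneg_left hS_le (mul_pos hexpnη hapos).le,
      mul_le_mul_of_nonneg_left hE1.le hapos.le]
  have h3 : Real.exp (-η) * a / T ≤ Real.exp (θ (x + ξ) k) / T := by gcongr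
  have h4 : Real.exp (θ (x + ξ) k) / T ≤ Real.exp η * a / T := by gcongr
  have hid : a * (Real.exp η - Real.exp (-η)) / T
      = Real.exp η * a / T - Real.exp (-η) * a / T := by ring
  rw [abs_le]
  constructor
  · linarith
  · linarith
end

section
/- Let a, b ∈ ℝ^K and η ≥ 0 satisfy |a_p − b_p| ≤ η for every p ∈ {1,…,K}. Then for every k ∈ {1,…,K}, the softmax components satisfy | exp(a_k)/Σ_{p=1}^K exp(a_p) − exp(b_k)/Σ_{p=1}^K exp(b_p) | ≤ exp(a_k) · (e^η − e^{−η}) / Σ_{p=1}^K exp(b_p). -/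
/-- If `a b : ℝᴷ` (K ≥ 1) and `η ≥ 0` satisfy `|aₚ − bₚ| ≤ η` for all `p`,
then for every `k`,
`|exp(aₖ)/∑ₚ exp(aₚ) − exp(bₖ)/∑ₚ exp(bₚ)| ≤ exp(aₖ)·(e^η − e^(−η)) / ∑ₚ exp(bₚ)`. -/
theorem softmax_component_diff_bound (K : ℕ) (hK : 1 ≤ K) (a b : Fin K → ℝ)
    (η : ℝ) (hη : 0 ≤ η) (h : ∀ p : Fin K, |a p - b p| ≤ η) :
    ∀ k : Fin K,
      |Real.exp (a k) / (∑ p, Real.exp (a p)) - Real.exp (b k) / (∑ p, Real.exp (b p))| ≤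
        Real.exp (a k) * (Real.exp η - Real.exp (-η)) / (∑ p, Real.exp (b p)) := by
  intro k
  have hKpos : 0 < K := hK
  set Sa := ∑ p, Real.exp (a p) with hSa
  set Sb := ∑ p, Real.exp (b p) with hSb
  have hSa0 : 0 < Sa :=
    Finset.sum_pos (fun i _ => Real.exp_pos _) ⟨⟨0, hKpos⟩, Finset.mem_univ _⟩
  have hSb0 : 0 < Sb :=
    Finset.sum_pos (fun i _ => Real.exp_pos _) ⟨⟨0, hKpos⟩, Finset.mem_univ _⟩
  have hub : Sb ≤ Real.exp η * Sa := by
    rw [hSa, hSb, Finset.mul_sum]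
    apply Finset.sum_le_sum
    intro i _
    rw [← Real.exp_add]
    exact Real.exp_le_exp.mpr (by linarith [(abs_le.mp (h i)).1])
  have hlb : Real.exp (-η) * Sa ≤ Sb := by
    rw [hSa, hSb, Finset.mul_sum]
    apply Finset.sum_le_sum
    intro i _
    rw [← Real.exp_add]
    exact Real.exp_le_exp.mpr (by linarith [(abs_le.mp (h i)).2])
  have hx1 : Real.exp (b k - a k) ≤ Real.exp η :=
    Real.exp_le_exp.mpr (by linarith [(abs_le.mp (h k)).1])
  have hx2 : Real.exp (-η) ≤ Real.exp (b k - a k) :=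
    Real.exp_le_exp.mpr (by linarith [(abs_le.mp (h k)).2])
  have hr1 : Sb / Sa ≤ Real.exp η := (div_le_iff₀ hSa0).mpr (by linarith)
  have hr2 : Real.exp (-η) ≤ Sb / Sa := (le_div_iff₀ hSa0).mpr hlb
  have key : Real.exp (a k) / Sa - Real.exp (b k) / Sb
      = Real.exp (a k) / Sb * (Sb / Sa - Real.exp (b k - a k)) := by
    rw [Real.exp_sub]
    field_simp
  rw [key, abs_mul, abs_of_pos (by positivity : (0:ℝ) < Real.exp (a k) / Sb)]
  have habs : |Sb / Sa - Real.exp (b k - a k)| ≤ Real.exp η - Real.exp (-η) := by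
    rw [abs_le]; constructor <;> linarith
  calc Real.exp (a k) / Sb * |Sb / Sa - Real.exp (b k - a k)|
      ≤ Real.exp (a k) / Sb * (Real.exp η - Real.exp (-η)) :=
        mul_le_mul_of_nonneg_left habs (by positivity)
    _ = Real.exp (a k) * (Real.exp η - Real.exp (-η)) / Sb := by ring
end

section
/- Let L ≥ 2 and consider a fully-connected network with hidden states h_0(x) = x, h_i(x) = f∘(w_i h_{i−1}(x) + b_i) for 1 ≤ i ≤ L−1, and logits θ(x) = w_L h_{L−1}(x) + b_L, where f : ℝ → ℝ is Lipschitz with constant C ≥ 0 and applied componentwise. Then for any input x, perturbation ξ, and output index k, |θ_k(x) − θ_k(x+ξ)| ≤ C^{L−1} · (|w_L|·|w_{L−1}|⋯|w_1|·|ξ|)_k, where |·| denotes entrywise absolute value. -/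
lemma hidden_diff_bound (dims : ℕ → ℕ)
    (w : (i : ℕ) → Matrix (Fin (dims (i + 1))) (Fin (dims i)) ℝ)
    (b : (i : ℕ) → Fin (dims (i + 1)) → ℝ)
    (f : ℝ → ℝ) (C : ℝ) (hC : 0 ≤ C)
    (hf : ∀ s t : ℝ, |f s - f t| ≤ C * |s - t|)
    (x ξ : Fin (dims 0) → ℝ) :
    ∀ i : ℕ, ∀ j : Fin (dims i),
      |hiddenState dims w b f i x j - hiddenState dims w b f i (x + ξ) j| ≤
        C ^ i * absChain dims w ξ i j := by
  intro i
  induction i with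
  | zero =>
      intro j
      simp [hiddenState, absChain, Pi.add_apply, abs_sub_comm]
  | succ i ih =>
      intro j
      simp only [hiddenState]
      calc |f ((w i).mulVec (hiddenState dims w b f i x) j + b i j) -
             f ((w i).mulVec (hiddenState dims w b f i (x + ξ)) j + b i j)|
          ≤ C * |((w i).mulVec (hiddenState dims w b f i x) j + b i j) -
             ((w i).mulVec (hiddenState dims w b f i (x + ξ)) j + b i j)| := hf _ _
        _ = C * |∑ l, w i j l * (hiddenState dims w b f i x l -
              hiddenState dims w b f i (x + ξ) l)| := by
            congr 1
            simp [Matrix.mulVec, dotProduct, mul_sub, Finset.sum_sub_distrib]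
        _ ≤ C * ∑ l, |w i j l| * (C ^ i * absChain dims w ξ i l) := by
            gcongr
            refine (Finset.abs_sum_le_sum_abs _ _).trans ?_
            apply Finset.sum_le_sum
            intro l _
            rw [abs_mul]
            exact mul_le_mul_of_nonneg_left (ih l) (abs_nonneg _)
        _ = C ^ (i + 1) * absChain dims w ξ (i + 1) j := by
            simp [absChain, Matrix.mulVec, dotProduct, Matrix.map_apply,
              Finset.mul_sum, pow_succ]
            ring_nf

/-- For `L ≥ 2` and logits `θ(x) = w_L h_{L-1}(x) + b_L` (here `w_L`,
`b_L` are `w (L-1)`, `b (L-1)`, and the output index type is `Fin (dims (L-1+1))`,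
which agrees with `Fin (dims L)` since `L ≥ 2`): for any input `x`, perturbation `ξ`
and output index `k`, `|θ_k(x) − θ_k(x+ξ)| ≤ C^{L-1} · (|w_L|·|w_{L-1}|⋯|w_1|·|ξ|)_k`. -/
theorem logit_perturbation_bound (L : ℕ) (hL : 2 ≤ L) (dims : ℕ → ℕ)
    (w : (i : ℕ) → Matrix (Fin (dims (i + 1))) (Fin (dims i)) ℝ)
    (b : (i : ℕ) → Fin (dims (i + 1)) → ℝ)
    (f : ℝ → ℝ) (C : ℝ) (hC : 0 ≤ C)
    (hf : ∀ s t : ℝ, |f s - f t| ≤ C * |s - t|)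
    (θ : (Fin (dims 0) → ℝ) → Fin (dims (L - 1 + 1)) → ℝ)
    (hθ : ∀ y k, θ y k =
      (w (L - 1)).mulVec (hiddenState dims w b f (L - 1) y) k + b (L - 1) k)
    (x ξ : Fin (dims 0) → ℝ) :
    ∀ k : Fin (dims (L - 1 + 1)),
      |θ x k - θ (x + ξ) k| ≤ C ^ (L - 1) * absChain dims w ξ (L - 1 + 1) k := by

  intro k
  have h := hidden_diff_bound dims w b f C hC hf x ξ (L - 1)
  rw [hθ, hθ]
  have : (w (L-1)).mulVec (hiddenState dims w b f (L-1) x) k + b (L-1) k -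
      ((w (L-1)).mulVec (hiddenState dims w b f (L-1) (x+ξ)) k + b (L-1) k) =
      ∑ l, w (L-1) k l * (hiddenState dims w b f (L-1) x l -
        hiddenState dims w b f (L-1) (x+ξ) l) := by
    simp [Matrix.mulVec, dotProduct, mul_sub, Finset.sum_sub_distrib]
  rw [this]
  calc |∑ l, w (L-1) k l * (hiddenState dims w b f (L-1) x l -
        hiddenState dims w b f (L-1) (x+ξ) l)|
      ≤ ∑ l, |w (L-1) k l| * (C ^ (L-1) * absChain dims w ξ (L-1) l) := by
        refine (Finset.abs_sum_le_sum_abs _ _).trans ?_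
        apply Finset.sum_le_sum
        intro l _
        rw [abs_mul]
        exact mul_le_mul_of_nonneg_left (h l) (abs_nonneg _)
    _ = C ^ (L-1) * absChain dims w ξ (L-1+1) k := by
        simp [absChain, Matrix.mulVec, dotProduct, Matrix.map_apply, Finset.mul_sum]
        apply Finset.sum_congr rfl
        intro l _
        ring
end
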